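/- Fix α ∈ [0,1), a constant C > 0, and λ > 0. Suppose k, l ∈ ℤ^n satisfy, for every j = 1,…,n: λ⟨l⟩^{α/(1−α)}(l_j − C) < ⟨k⟩^{α/(1−α)}(k_j + C) and λ⟨l⟩^{α/(1−α)}(l_j + C) > ⟨k⟩^{α/(1−α)}(k_j − C). Then there is a constant M = M(n, α, C) ≥ 1 such that if ⟨l⟩ ≥ M·(1 ∨ λ^{−(1−α)}), then (1/M) λ^{1−α} ⟨l⟩ ≤ ⟨k⟩ ≤ M λ^{1−α} ⟨l⟩. -/

import Mathlib

open Real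

noncomputable def jbracket {n : ℕ} (k : Fin n → ℤ) : ℝ :=
  Real.sqrt (1 + ∑ i, ((k i : ℝ)) ^ 2)

lemma jbr_one_le {n : ℕ} (k : Fin n → ℤ) : 1 ≤ jbracket k := by
  have h : (1:ℝ) ≤ 1 + ∑ i, ((k i : ℝ)) ^ 2 :=
    le_add_of_nonneg_right (Finset.sum_nonneg fun i _ => sq_nonneg _)
  calc (1:ℝ) = Real.sqrt 1 := Real.sqrt_one.symm
  _ ≤ _ := Real.sqrt_le_sqrt h

lemma pow_comp {u v c q : ℝ} (hu : 0 < u) (hv : 0 < v) (hc : 1 ≤ c) (hq : 1 ≤ q)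
    (h : u ^ q ≤ c * v ^ q) : u ≤ c * v := by
  have hq0 : 0 < q := lt_of_lt_of_le one_pos hq
  have h1 : u = (u ^ q) ^ q⁻¹ := by
    rw [← Real.rpow_mul hu.le, mul_inv_cancel₀ hq0.ne', Real.rpow_one]
  have h2 : (u ^ q) ^ q⁻¹ ≤ (c * v ^ q) ^ q⁻¹ :=
    Real.rpow_le_rpow (Real.rpow_nonneg hu.le q) h (inv_nonneg.2 hq0.le)
  have h3 : (c * v ^ q) ^ q⁻¹ = c ^ q⁻¹ * v := by
    rw [Real.mul_rpow (by linarith) (Real.rpow_nonneg hv.le q),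
      ← Real.rpow_mul hv.le, mul_inv_cancel₀ hq0.ne', Real.rpow_one]
  have hqi : q⁻¹ ≤ 1 := by rw [inv_le_one₀ hq0]; exact hq
  have h4 : c ^ q⁻¹ ≤ c := by
    calc c ^ q⁻¹ ≤ c ^ (1:ℝ) := Real.rpow_le_rpow_of_exponent_le hc hqi
    _ = c := Real.rpow_one c
  calc u = (u ^ q) ^ q⁻¹ := h1
  _ ≤ c ^ q⁻¹ * v := by rw [← h3]; exact h2
  _ ≤ c * v := mul_le_mul_of_nonneg_right h4 hv.le

lemma sqrt_sum_smul {n : ℕ} (a : ℝ) (ha : 0 ≤ a) (f : Fin n → ℝ) :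
    Real.sqrt (∑ i, (a * f i) ^ 2) = a * Real.sqrt (∑ i, f i ^ 2) := by
  rw [show ∑ i, (a * f i) ^ 2 = a ^ 2 * ∑ i, f i ^ 2 by
      rw [Finset.mul_sum]; congr 1; funext i; ring,
    Real.sqrt_mul (sq_nonneg a), Real.sqrt_sq ha]

lemma l2_rev_tri {n : ℕ} (f g : Fin n → ℝ) (D : ℝ) (hD : 0 ≤ D)
    (h : ∀ j, |f j - g j| ≤ D) :
    |Real.sqrt (∑ i, f i ^ 2) - Real.sqrt (∑ i, g i ^ 2)| ≤ Real.sqrt n * D := by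
  let u : EuclideanSpace ℝ (Fin n) := WithLp.toLp 2 f
  let v : EuclideanSpace ℝ (Fin n) := WithLp.toLp 2 g
  have hu : ‖u‖ = Real.sqrt (∑ i, f i ^ 2) := by
    rw [EuclideanSpace.norm_eq]
    congr 1
    exact Finset.sum_congr rfl fun i _ => by simp [u, sq_abs]
  have hv : ‖v‖ = Real.sqrt (∑ i, g i ^ 2) := by
    rw [EuclideanSpace.norm_eq]
    congr 1
    exact Finset.sum_congr rfl fun i _ => by simp [v, sq_abs]
  have huv : ‖u - v‖ ≤ Real.sqrt n * D := by
    rw [EuclideanSpace.norm_eq]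
    have hle : ∑ i, ‖(u - v) i‖ ^ 2 ≤ ∑ _i : Fin n, D ^ 2 := by
      apply Finset.sum_le_sum
      intro i _
      have h2 : ‖(u - v) i‖ = |f i - g i| := by
        simp [u, v, PiLp.sub_apply, Real.norm_eq_abs]
      rw [h2]
      exact pow_le_pow_left₀ (abs_nonneg _) (h i) 2
    have hcnt : ∑ _i : Fin n, D ^ 2 = (n : ℝ) * D ^ 2 := by
      simp [Finset.sum_const, Finset.card_univ, nsmul_eq_mul]
    calc Real.sqrt (∑ i, ‖(u - v) i‖ ^ 2)
        ≤ Real.sqrt ((n : ℝ) * D ^ 2) := by rw [← hcnt]; exact Real.sqrt_le_sqrt hle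
    _ = Real.sqrt n * D := by
        rw [Real.sqrt_mul (by positivity), Real.sqrt_sq hD]
  calc |Real.sqrt (∑ i, f i ^ 2) - Real.sqrt (∑ i, g i ^ 2)| = |‖u‖ - ‖v‖| := by
        rw [hu, hv]
  _ ≤ ‖u - v‖ := abs_norm_sub_norm_le u v
  _ ≤ _ := huv

/-- If the λ-dilated symbol `(η_k^α)_λ` and `η_l^α` have overlapping supports
(expressed by the coordinatewise inequalities), then for `⟨l⟩` large compared
with `1 ∨ λ^{−(1−α)}` one has `⟨k⟩ ∼ λ^{1−α}⟨l⟩`, with a constant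
`M = M(n, α, C)`. -/
theorem dilated_overlap_comparable (n : ℕ) (α : ℝ) (hα0 : 0 ≤ α) (hα1 : α < 1)
    (C : ℝ) (hC : 0 < C) :
    ∃ M : ℝ, 1 ≤ M ∧
      ∀ (lam : ℝ), 0 < lam → ∀ k l : Fin n → ℤ,
        (∀ j, lam * (jbracket l ^ (α / (1 - α)) * ((l j : ℝ) - C))
            < jbracket k ^ (α / (1 - α)) * ((k j : ℝ) + C)) →
        (∀ j, lam * (jbracket l ^ (α / (1 - α)) * ((l j : ℝ) + C))
            > jbracket k ^ (α / (1 - α)) * ((k j : ℝ) - C)) →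
        M * max 1 (lam ^ (-(1 - α))) ≤ jbracket l →
        (1 / M) * (lam ^ (1 - α) * jbracket l) ≤ jbracket k ∧
          jbracket k ≤ M * (lam ^ (1 - α) * jbracket l) := by
  have h1 : 0 < 1 - α := by linarith
  set β := α / (1 - α) with hβdef
  have hβ : 0 ≤ β := div_nonneg hα0 h1.le
  have hαβ : (1 - α) * β = α := by rw [hβdef]; field_simp
  have hαq : (1 - α) * (β + 1) = 1 := by rw [mul_add, hαβ, mul_one]; ring
  have hq1 : (1:ℝ) ≤ β + 1 := by linarith
  set C' := Real.sqrt n * C + 1 with hC'def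
  have hsn : 0 ≤ Real.sqrt n := Real.sqrt_nonneg _
  have hC'1 : 1 ≤ C' := by
    rw [hC'def]; linarith only [mul_nonneg hsn hC.le]
  set M := 4 * C' + 4 with hMdef
  have hM1 : (1:ℝ) ≤ M := by rw [hMdef]; linarith only [hC'1]
  have hM0 : (0:ℝ) < M := by linarith only [hM1]
  refine ⟨M, hM1, ?_⟩
  intro lam hlam k l hlt hgt hM
  set x := jbracket k with hxdef
  set z := jbracket l with hzdef
  have hx1 : 1 ≤ x := jbr_one_le k
  have hz1 : 1 ≤ z := jbr_one_le l
  have hx0 : 0 < x := lt_of_lt_of_le one_pos hx1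
  have hz0 : 0 < z := lt_of_lt_of_le one_pos hz1
  set A := x ^ β with hAdef
  set B := lam * z ^ β with hBdef
  have hA0 : 0 < A := Real.rpow_pos_of_pos hx0 β
  have hB0 : 0 < B := mul_pos hlam (Real.rpow_pos_of_pos hz0 β)
  -- coordinatewise bound
  have hcoord : ∀ j, |A * (k j : ℝ) - B * (l j : ℝ)| ≤ C * (A + B) := by
    intro j
    have h1j := hlt j
    have h2j := hgt j
    rw [abs_le, hBdef]
    constructor
    · linarith only [h1j]
    · linarith only [h2j]
  -- norms
  set nk := Real.sqrt (∑ i, ((k i : ℝ)) ^ 2) with hnkdef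
  set nl := Real.sqrt (∑ i, ((l i : ℝ)) ^ 2) with hnldef
  have hsk : 0 ≤ ∑ i, ((k i : ℝ)) ^ 2 := Finset.sum_nonneg fun i _ => sq_nonneg _
  have hsl : 0 ≤ ∑ i, ((l i : ℝ)) ^ 2 := Finset.sum_nonneg fun i _ => sq_nonneg _
  have hnk0 : 0 ≤ nk := Real.sqrt_nonneg _
  have hnl0 : 0 ≤ nl := Real.sqrt_nonneg _
  have hnk2 : nk ^ 2 = ∑ i, ((k i : ℝ)) ^ 2 := Real.sq_sqrt hsk
  have hnl2 : nl ^ 2 = ∑ i, ((l i : ℝ)) ^ 2 := Real.sq_sqrt hsl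
  have hnkx : nk ≤ x := Real.sqrt_le_sqrt (by linarith only [hsk])
  have hnlz : nl ≤ z := Real.sqrt_le_sqrt (by linarith only [hsl])
  have hxnk : x ≤ nk + 1 := by
    have h : (1 + ∑ i, ((k i : ℝ)) ^ 2) ≤ (nk + 1) ^ 2 := by
      nlinarith only [hnk2, hnk0]
    calc x ≤ Real.sqrt ((nk + 1) ^ 2) := Real.sqrt_le_sqrt h
    _ = nk + 1 := Real.sqrt_sq (by positivity)
  have hznl : z ≤ nl + 1 := by
    have h : (1 + ∑ i, ((l i : ℝ)) ^ 2) ≤ (nl + 1) ^ 2 := by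
      nlinarith only [hnl2, hnl0]
    calc z ≤ Real.sqrt ((nl + 1) ^ 2) := Real.sqrt_le_sqrt h
    _ = nl + 1 := Real.sqrt_sq (by positivity)
  -- reverse triangle inequality in ℓ²
  have htri : |A * nk - B * nl| ≤ Real.sqrt n * (C * (A + B)) := by
    have ht := l2_rev_tri (fun j => A * (k j : ℝ)) (fun j => B * (l j : ℝ))
      (C * (A + B)) (by positivity) hcoord
    rwa [sqrt_sum_smul A hA0.le, sqrt_sum_smul B hB0.le, ← hnkdef, ← hnldef] at ht
  -- main estimate
  have hxp : x ^ (β + 1) = A * x := Real.rpow_add_one hx0.ne' β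
  have hzp : z ^ (β + 1) = z ^ β * z := Real.rpow_add_one hz0.ne' β
  have hmain : |x ^ (β + 1) - B * z| ≤ C' * (A + B) := by
    have e0 : A * nk ≤ A * x := mul_le_mul_of_nonneg_left hnkx hA0.le
    have e0' : A * x ≤ A * (nk + 1) := mul_le_mul_of_nonneg_left hxnk hA0.le
    have e1 : |A * x - A * nk| ≤ A := by
      rw [abs_of_nonneg (by linarith only [e0])]
      linarith only [e0']
    have f0 : B * nl ≤ B * z := mul_le_mul_of_nonneg_left hnlz hB0.le
    have f0' : B * z ≤ B * (nl + 1) := mul_le_mul_of_nonneg_left hznl hB0.le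
    have e3 : |B * nl - B * z| ≤ B := by
      rw [abs_of_nonpos (by linarith only [f0])]
      linarith only [f0']
    have t1 := abs_sub_le (A * x) (A * nk) (B * z)
    have t2 := abs_sub_le (A * nk) (B * nl) (B * z)
    rw [hxp]
    calc |A * x - B * z| ≤ |A * x - A * nk| + |A * nk - B * z| := t1
    _ ≤ |A * x - A * nk| + (|A * nk - B * nl| + |B * nl - B * z|) := by
        linarith only [t2]
    _ ≤ A + Real.sqrt n * (C * (A + B)) + B := by linarith only [e1, e3, htri]
    _ = C' * (A + B) := by rw [hC'def]; ring
  -- introduce y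
  set y := lam ^ (1 - α) * z with hydef
  have hlam1α : 0 < lam ^ (1 - α) := Real.rpow_pos_of_pos hlam _
  have hy0 : 0 < y := mul_pos hlam1α hz0
  have hyq : y ^ (β + 1) = lam * z ^ (β + 1) := by
    rw [hydef, Real.mul_rpow hlam1α.le hz0.le, ← Real.rpow_mul hlam.le, hαq,
      Real.rpow_one]
  have hBz : B * z = y ^ (β + 1) := by rw [hyq, hzp, hBdef]; ring
  have hyb : lam ^ (1 - α) * y ^ β = B := by
    have hyβ : y ^ β = lam ^ α * z ^ β := by
      rw [hydef, Real.mul_rpow hlam1α.le hz0.le, ← Real.rpow_mul hlam.le, hαβ]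
    have hll : lam ^ (1 - α) * lam ^ α = lam := by
      rw [← Real.rpow_add hlam, sub_add_cancel, Real.rpow_one]
    calc lam ^ (1 - α) * y ^ β = (lam ^ (1 - α) * lam ^ α) * z ^ β := by
          rw [hyβ]; ring
    _ = B := by rw [hll, hBdef]
  -- threshold consequences
  have hmax1 : (1:ℝ) ≤ max 1 (lam ^ (-(1 - α))) := le_max_left _ _
  have hzM : M ≤ z := le_trans (le_mul_of_one_le_right hM0.le hmax1) hM
  have hinv : lam ^ (1 - α) * lam ^ (-(1 - α)) = 1 := by
    rw [← Real.rpow_add hlam, add_neg_cancel, Real.rpow_zero]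
  have h2' : M * lam ^ (-(1 - α)) ≤ z :=
    le_trans (mul_le_mul_of_nonneg_left (le_max_right _ _) hM0.le) hM
  have hyM : M ≤ y := by
    have hmul := mul_le_mul_of_nonneg_left h2' hlam1α.le
    calc M = lam ^ (1 - α) * (M * lam ^ (-(1 - α))) := by
          rw [show lam ^ (1 - α) * (M * lam ^ (-(1 - α)))
              = M * (lam ^ (1 - α) * lam ^ (-(1 - α))) by ring, hinv, mul_one]
    _ ≤ lam ^ (1 - α) * z := hmul
  have hMlam : M * lam ^ (1 - α) ≤ y := by
    rw [hydef]
    calc M * lam ^ (1 - α) = lam ^ (1 - α) * M := by ring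
    _ ≤ lam ^ (1 - α) * z := mul_le_mul_of_nonneg_left hzM hlam1α.le
  -- B small compared to y^(β+1)
  have hyp1 : y ^ (β + 1) = y ^ β * y := Real.rpow_add_one hy0.ne' β
  have hyβ0 : 0 < y ^ β := Real.rpow_pos_of_pos hy0 β
  have hBp : M * B ≤ y ^ (β + 1) := by
    rw [hyp1, ← hyb]
    calc M * (lam ^ (1 - α) * y ^ β) = (M * lam ^ (1 - α)) * y ^ β := by ring
    _ ≤ y * y ^ β := mul_le_mul_of_nonneg_right hMlam hyβ0.le
    _ = y ^ β * y := mul_comm _ _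
  have hxA : A * x = x ^ (β + 1) := hxp.symm
  have hAx : A ≤ x ^ (β + 1) := by
    calc A = A * 1 := (mul_one A).symm
    _ ≤ A * x := mul_le_mul_of_nonneg_left hx1 hA0.le
    _ = x ^ (β + 1) := hxA
  have hkey : |x ^ (β + 1) - y ^ (β + 1)| ≤ C' * (A + B) := by
    rw [← hBz]; exact hmain
  have hxq0 : 0 < x ^ (β + 1) := Real.rpow_pos_of_pos hx0 _
  have hyq0 : 0 < y ^ (β + 1) := Real.rpow_pos_of_pos hy0 _
  have hC'0 : (0:ℝ) ≤ C' := by linarith only [hC'1]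
  clear_value y B A nl nk z x M C' β
  have h4B : 4 * C' * B ≤ M * B := by
    rw [hMdef]; nlinarith only [hB0]
  have hBy : C' * B ≤ y ^ (β + 1) / 4 := by linarith only [h4B, hBp]
  rw [abs_le] at hkey
  constructor
  · -- lower bound: (1/M) * y ≤ x
    have hCA : C' * A ≤ C' * x ^ (β + 1) := mul_le_mul_of_nonneg_left hAx hC'0
    have hC'x : 0 ≤ C' * x ^ (β + 1) := mul_nonneg hC'0 hxq0.le
    have hstep : y ^ (β + 1) ≤ 2 * (1 + C') * x ^ (β + 1) := by
      linarith only [hkey.1, hBy, hCA, hxq0.le, hC'x]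
    have hcmp := pow_comp hy0 hx0
      (by linarith only [hC'1] : (1:ℝ) ≤ 2 * (1 + C')) hq1 hstep
    have h2M : 2 * (1 + C') * x ≤ M * x :=
      mul_le_mul_of_nonneg_right (by rw [hMdef]; linarith only [hC'1]) hx0.le
    have hyMx : y ≤ M * x := le_trans hcmp h2M
    rw [div_mul_eq_mul_div, one_mul, div_le_iff₀ hM0]
    linarith only [hyMx]
  · -- upper bound: x ≤ M * y
    by_cases hxy : x ≤ y
    · exact le_trans hxy (le_mul_of_one_le_left hy0.le hM1)
    · push_neg at hxy
      have hMx : M ≤ x := le_trans hyM hxy.le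
      have hAsm : M * A ≤ x ^ (β + 1) := by
        calc M * A = A * M := mul_comm _ _
        _ ≤ A * x := mul_le_mul_of_nonneg_left hMx hA0.le
        _ = x ^ (β + 1) := hxA
      have h4A : 4 * C' * A ≤ M * A := by
        rw [hMdef]; nlinarith only [hA0]
      have c1 : C' * A ≤ x ^ (β + 1) / 4 := by linarith only [h4A, hAsm]
      have hstep : x ^ (β + 1) ≤ 2 * y ^ (β + 1) := by
        linarith only [hkey.2, c1, hBy, hyq0.le]
      have hcmp := pow_comp hx0 hy0 (by norm_num : (1:ℝ) ≤ 2) hq1 hstep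
      have h2M : 2 * y ≤ M * y :=
        mul_le_mul_of_nonneg_right (by rw [hMdef]; linarith only [hC'1]) hy0.le
      exact le_trans hcmp h2M
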